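/- Let γ be a hereditary Plotkin radical on finite groups which satisfies F*(G) ⊆ γ(G) for every finite group G with h_γ(G) < ∞. If M is a maximal subgroup of a finite group G and both h_γ(G) and h_γ(M) are finite, then h_γ(G) - h_γ(M) ≤ 2. -/

import Mathlib

open Subgroup

open Subgroup

/-- The Fitting subgroup of a finite group: the largest normal nilpotent subgroup,
realized as the join of all normal nilpotent subgroups. -/
def fittingSub (G : Type*) [Group G] : Subgroup G :=
  sSup {H : Subgroup G | H.Normal ∧ Group.IsNilpotent H}

/-- A subgroup is subnormal if it can be joined to the whole group by a chain of
successively normal subgroups. -/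
def Subnormal {G : Type*} [Group G] (H : Subgroup G) : Prop :=
  ∃ (n : ℕ) (c : Fin (n + 1) → Subgroup G),
    c 0 = H ∧ c (Fin.last n) = ⊤ ∧
      ∀ i : Fin n, c i.castSucc ≤ c i.succ ∧
        ∀ x ∈ c i.castSucc, ∀ y ∈ c i.succ, y * x * y⁻¹ ∈ c i.castSucc

/-- A group is quasisimple if it is perfect and its central quotient is simple. -/
def IsQuasisimple (Q : Type*) [Group Q] : Prop :=
  commutator Q = ⊤ ∧ IsSimpleGroup (Q ⧸ Subgroup.center Q)

/-- The layer `E(G)`: the subgroup generated by all subnormal quasisimple subgroups. -/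
def layer (G : Type*) [Group G] : Subgroup G :=
  sSup {H : Subgroup G | Subnormal H ∧ IsQuasisimple H}

/-- The generalized Fitting subgroup `F*(G) = F(G) E(G)`. -/
def genFitting (G : Type*) [Group G] : Subgroup G :=
  fittingSub G ⊔ layer G

open Subgroup

/-- The ascending `F`-series of a finite group, together with proofs of normality. -/
def radSeriesAux (F : ∀ (G : Type) [Group G] [Finite G], Subgroup G)
    (hF : ∀ (G : Type) [Group G] [Finite G], (F G).Normal)
    (G : Type) [Group G] [Finite G] : ℕ → {H : Subgroup G // H.Normal}
  | 0 => ⟨⊥, inferInstance⟩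
  | n + 1 =>
    letI := (radSeriesAux F hF G n).2
    ⟨(F (G ⧸ (radSeriesAux F hF G n).1)).comap (QuotientGroup.mk' (radSeriesAux F hF G n).1),
      Subgroup.Normal.comap (hF _) _⟩

/-- The ascending `F`-series of a finite group. -/
def radSeries (F : ∀ (G : Type) [Group G] [Finite G], Subgroup G)
    (hF : ∀ (G : Type) [Group G] [Finite G], (F G).Normal)
    (G : Type) [Group G] [Finite G] (n : ℕ) : Subgroup G :=
  (radSeriesAux F hF G n).1

/-- The `F`-length of a finite group: the least `h` with `F_{(h)}(G) = G`,
and `∞` if there is no such `h`. -/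
noncomputable def radLength (F : ∀ (G : Type) [Group G] [Finite G], Subgroup G)
    (hF : ∀ (G : Type) [Group G] [Finite G], (F G).Normal)
    (G : Type) [Group G] [Finite G] : ℕ∞ :=
  sInf {n : ℕ∞ | ∃ m : ℕ, n = m ∧ radSeries F hF G m = ⊤}

open Subgroup

/-- A functorial: an assignment of a subgroup `sub G ≤ G` to every finite group `G`,
compatible with isomorphisms (hence the value is always a normal -- indeed
characteristic -- subgroup, which we record as a field). -/
structure GroupFunctorial where
  sub : ∀ (G : Type) [Group G] [Finite G], Subgroup G
  map_iso : ∀ (G H : Type) [Group G] [Finite G] [Group H] [Finite H] (e : G ≃* H),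
    (sub G).map e.toMonoidHom = sub H
  normal : ∀ (G : Type) [Group G] [Finite G], (sub G).Normal

/-- A hereditary Plotkin radical: a functorial satisfying
(P1) `f(γ(G)) ≤ γ(f(G))` for every epimorphism `f : G → G*`, and
(P2) `γ(G) ∩ N = γ(N)` for every normal subgroup `N` of `G`. -/
structure PlotkinRadical extends GroupFunctorial where
  map_le : ∀ (G H : Type) [Group G] [Finite G] [Group H] [Finite H] (f : G →* H),
    Function.Surjective f → (sub G).map f ≤ sub H
  inf_eq : ∀ (G : Type) [Group G] [Finite G] (N : Subgroup G), N.Normal →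
    sub G ⊓ N = (sub N).map N.subtype

/-- A hereditary Kurosh-Amitsur radical: a hereditary Plotkin radical additionally
satisfying (P3) `γ(G/γ(G)) = 1` for every finite group `G`. -/
structure KARadical extends PlotkinRadical where
  radical_quot : ∀ (G : Type) [Group G] [Finite G],
    letI := normal G
    sub (G ⧸ sub G) = ⊥

/-- The γ-series of a hereditary Plotkin radical. -/
def PlotkinRadical.series (γ : PlotkinRadical) (G : Type) [Group G] [Finite G] (n : ℕ) :
    Subgroup G :=
  radSeries γ.sub γ.normal G n

/-- The γ-length of a finite group: the least `h` with `γ_{(h)}(G) = G`, and `∞` if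
there is no such `h`. -/
noncomputable def PlotkinRadical.length (γ : PlotkinRadical) (G : Type) [Group G] [Finite G] :
    ℕ∞ :=
  radLength γ.sub γ.normal G

/-! ### Auxiliary development -/

open Subgroup QuotientGroup Function
open commutatorElement

namespace PlotkinRadical

variable (γ : PlotkinRadical)

lemma series_normal (G : Type) [Group G] [Finite G] (n : ℕ) : (γ.series G n).Normal :=
  (radSeriesAux γ.sub γ.normal G n).2

lemma series_zero (G : Type) [Group G] [Finite G] : γ.series G 0 = ⊥ := rfl

lemma series_succ' (G : Type) [Group G] [Finite G] (n : ℕ) (N : Subgroup G) (hN : N.Normal)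
    (h : N = γ.series G n) :
    letI := hN
    γ.series G (n + 1) = (γ.sub (G ⧸ N)).comap (QuotientGroup.mk' N) := by
  subst h; rfl

lemma series_mono_succ (G : Type) [Group G] [Finite G] (n : ℕ) :
    γ.series G n ≤ γ.series G (n + 1) := by
  haveI := γ.series_normal G n
  rw [γ.series_succ' G n _ (γ.series_normal G n) rfl]
  intro x hx
  have h1 : (QuotientGroup.mk' (γ.series G n)) x = 1 := (QuotientGroup.eq_one_iff x).mpr hx
  simp only [Subgroup.mem_comap, h1]
  exact (γ.sub _).one_mem

lemma series_mono (G : Type) [Group G] [Finite G] {m n : ℕ} (h : m ≤ n) :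
    γ.series G m ≤ γ.series G n :=
  monotone_nat_of_le_succ (γ.series_mono_succ G) h

lemma length_le_iff (G : Type) [Group G] [Finite G] (h : ℕ) :
    γ.length G ≤ (h : ℕ∞) ↔ γ.series G h = ⊤ := by
  constructor
  · intro hle
    by_contra hser
    have h1 : ((h : ℕ) + 1 : ℕ∞) ≤ γ.length G := by
      apply le_sInf
      rintro b ⟨m, rfl, hm⟩
      have hmh : ¬ m ≤ h := by
        intro hc
        have hm' : γ.series G m = ⊤ := hm
        have h2 : (⊤ : Subgroup G) ≤ γ.series G h := hm' ▸ γ.series_mono G hc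
        exact hser (top_le_iff.mp h2)
      have : h + 1 ≤ m := by omega
      exact_mod_cast this
    have := h1.trans hle
    have h2 : (h : ℕ) + 1 ≤ h := by exact_mod_cast this
    omega
  · intro hser
    exact sInf_le ⟨h, rfl, hser⟩

lemma length_ne_top_iff (G : Type) [Group G] [Finite G] :
    γ.length G ≠ ⊤ ↔ ∃ h : ℕ, γ.series G h = ⊤ := by
  constructor
  · intro h
    obtain ⟨m, hm⟩ := WithTop.ne_top_iff_exists.mp h
    exact ⟨m, (γ.length_le_iff G m).mp (le_of_eq hm.symm)⟩
  · rintro ⟨h, hh⟩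
    have := (γ.length_le_iff G h).mpr hh
    exact ne_top_of_le_ne_top (WithTop.natCast_ne_top h) this

lemma series_map_le (G H : Type) [Group G] [Finite G] [Group H] [Finite H]
    (f : G →* H) (hf : Function.Surjective f) (j : ℕ) :
    (γ.series G j).map f ≤ γ.series H j := by
  induction j with
  | zero =>
    rw [γ.series_zero, γ.series_zero, Subgroup.map_bot]
  | succ n ih =>
    haveI := γ.series_normal G n; haveI := γ.series_normal H n
    rw [γ.series_succ' G n _ (γ.series_normal G n) rfl,
        γ.series_succ' H n _ (γ.series_normal H n) rfl]
    have hle : γ.series G n ≤ (γ.series H n).comap f := by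
      intro x hx
      exact Subgroup.mem_comap.mpr (ih ⟨x, hx, rfl⟩)
    set fbar := QuotientGroup.map (γ.series G n) (γ.series H n) f hle with hfbar
    have hfbars : Function.Surjective fbar := by
      intro q
      obtain ⟨y, rfl⟩ := QuotientGroup.mk'_surjective (γ.series H n) q
      obtain ⟨x, rfl⟩ := hf y
      exact ⟨QuotientGroup.mk' (γ.series G n) x, QuotientGroup.map_mk' _ _ _ _ x⟩
    rintro y ⟨x, hx, rfl⟩
    have hx' : (QuotientGroup.mk' (γ.series G n)) x ∈ γ.sub (G ⧸ γ.series G n) :=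
      Subgroup.mem_comap.mp hx
    have : fbar ((QuotientGroup.mk' (γ.series G n)) x) ∈ γ.sub (H ⧸ γ.series H n) :=
      γ.map_le _ _ fbar hfbars ⟨_, hx', rfl⟩
    rw [QuotientGroup.map_mk'] at this
    exact Subgroup.mem_comap.mpr this

lemma series_map_iso (G H : Type) [Group G] [Finite G] [Group H] [Finite H]
    (e : G ≃* H) (j : ℕ) : (γ.series G j).map e.toMonoidHom = γ.series H j := by
  apply le_antisymm (γ.series_map_le G H e.toMonoidHom e.surjective j)
  have h2 := γ.series_map_le H G e.symm.toMonoidHom e.symm.surjective j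
  have h3 := Subgroup.map_mono (f := e.toMonoidHom) h2
  rw [Subgroup.map_map] at h3
  have h4 : e.toMonoidHom.comp e.symm.toMonoidHom = MonoidHom.id H :=
    MonoidHom.ext fun x => e.apply_symm_apply x
  rw [h4, Subgroup.map_id] at h3
  exact h3

lemma length_ne_top_of_surjective (G H : Type) [Group G] [Finite G] [Group H] [Finite H]
    (f : G →* H) (hf : Function.Surjective f) (hG : γ.length G ≠ ⊤) : γ.length H ≠ ⊤ := by
  obtain ⟨h, hh⟩ := (γ.length_ne_top_iff G).mp hG
  refine (γ.length_ne_top_iff H).mpr ⟨h, ?_⟩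
  have := γ.series_map_le G H f hf h
  rw [hh] at this
  rw [eq_top_iff]
  intro y _
  obtain ⟨x, rfl⟩ := hf y
  exact this ⟨x, Subgroup.mem_top x, rfl⟩

lemma length_ne_top_congr (G H : Type) [Group G] [Finite G] [Group H] [Finite H]
    (e : G ≃* H) (hG : γ.length G ≠ ⊤) : γ.length H ≠ ⊤ :=
  γ.length_ne_top_of_surjective G H e.toMonoidHom e.surjective hG

lemma series_shift (G : Type) [Group G] [Finite G] (k : ℕ) (N : Subgroup G) (hN : N.Normal)
    (h : N = γ.series G k) (m : ℕ) :
    letI := hN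
    γ.series G (k + m) = (γ.series (G ⧸ N) m).comap (QuotientGroup.mk' N) := by
  letI := hN
  induction m with
  | zero =>
    rw [Nat.add_zero, γ.series_zero]
    have : (⊥ : Subgroup (G ⧸ N)).comap (QuotientGroup.mk' N) = (QuotientGroup.mk' N).ker := rfl
    rw [this, QuotientGroup.ker_mk']
    exact h.symm
  | succ m ih =>
    haveI hSn := γ.series_normal G (k + m)
    haveI hSQ := γ.series_normal (G ⧸ N) m
    have hNle : N ≤ γ.series G (k + m) := h ▸ γ.series_mono G (Nat.le_add_right k m)
    have hmapeq : (γ.series G (k + m)).map (QuotientGroup.mk' N) = γ.series (G ⧸ N) m := by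
      rw [ih]
      exact map_comap_eq_self_of_surjective (QuotientGroup.mk'_surjective N) _
    haveI : ((γ.series G (k+m)).map (QuotientGroup.mk' N)).Normal :=
      hSn.map _ (QuotientGroup.mk'_surjective N)
    set E := (QuotientGroup.quotientMulEquivOfEq hmapeq.symm).trans
      (QuotientGroup.quotientQuotientEquivQuotient N (γ.series G (k+m)) hNle) with hE
    have hEapp : ∀ x : G, E ((QuotientGroup.mk' (γ.series (G⧸N) m)) ((QuotientGroup.mk' N) x))
        = (QuotientGroup.mk' (γ.series G (k+m))) x := by
      intro x; rfl
    have hiso := γ.map_iso _ _ E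
    show γ.series G ((k + m) + 1) = (γ.series (G ⧸ N) (m + 1)).comap (QuotientGroup.mk' N)
    rw [γ.series_succ' G (k+m) _ hSn rfl, γ.series_succ' (G ⧸ N) m _ hSQ rfl]
    ext x
    simp only [Subgroup.mem_comap]
    rw [← hiso, Subgroup.mem_map]
    constructor
    · rintro ⟨y, hy, hyx⟩
      have hyx' : E y = (QuotientGroup.mk' (γ.series G (k+m))) x := hyx
      have : y = (QuotientGroup.mk' (γ.series (G⧸N) m)) ((QuotientGroup.mk' N) x) :=
        E.injective (by rw [hyx', hEapp])
      rwa [this] at hy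
    · intro hx
      exact ⟨(QuotientGroup.mk' (γ.series (G⧸N) m)) ((QuotientGroup.mk' N) x), hx, hEapp x⟩

lemma series_one (G : Type) [Group G] [Finite G] : γ.series G 1 = γ.sub G := by
  rw [γ.series_succ' G 0 ⊥ (by infer_instance) (γ.series_zero G).symm]
  set e := QuotientGroup.quotientBot (G := G) with he
  have hiso := γ.map_iso _ _ e
  have happ : ∀ x : G, e ((QuotientGroup.mk' (⊥ : Subgroup G)) x) = x := fun x => rfl
  ext x
  simp only [Subgroup.mem_comap]
  rw [← hiso, Subgroup.mem_map]
  constructor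
  · rintro hx
    exact ⟨(QuotientGroup.mk' (⊥ : Subgroup G)) x, hx, happ x⟩
  · rintro ⟨y, hy, hyx⟩
    have hyx' : e y = x := hyx
    have : y = (QuotientGroup.mk' (⊥ : Subgroup G)) x :=
      e.injective (by rw [hyx', happ])
    rwa [this] at hy

lemma map_subtype_top {G : Type} [Group G] (N : Subgroup G) :
    (⊤ : Subgroup ↥N).map N.subtype = N := by
  rw [← MonoidHom.range_eq_map, N.range_subtype]

lemma series_map_ker_le (G H : Type) [Group G] [Finite G] [Group H] [Finite H]
    (f : G →* H) (hf : Function.Surjective f) (hker : f.ker = γ.sub G) (m : ℕ) :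
    (γ.series G (m + 1)).map f ≤ γ.series H m := by
  haveI : (γ.sub G).Normal := γ.normal G
  have hshift := γ.series_shift G 1 (γ.sub G) (γ.normal G) (γ.series_one G).symm m
  haveI : f.ker.Normal := f.normal_ker
  set e := (QuotientGroup.quotientMulEquivOfEq hker.symm).trans
    (QuotientGroup.quotientKerEquivOfSurjective f hf) with he
  have heapp : ∀ x : G, e ((QuotientGroup.mk' (γ.sub G)) x) = f x := fun x => rfl
  have hiso := γ.series_map_iso _ _ e m
  rintro y ⟨x, hx, rfl⟩
  have hx' : x ∈ γ.series G (1 + m) := by rw [Nat.add_comm 1 m]; exact hx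
  rw [hshift] at hx'
  have h2 : (QuotientGroup.mk' (γ.sub G)) x ∈ γ.series (G ⧸ γ.sub G) m :=
    Subgroup.mem_comap.mp hx'
  have h3 : f x ∈ (γ.series (G ⧸ γ.sub G) m).map e.toMonoidHom := ⟨_, h2, heapp x⟩
  rwa [hiso] at h3

lemma series_inf (G : Type) [Group G] [Finite G] (N : Subgroup G) (hN : N.Normal) (j : ℕ) :
    (γ.series ↥N j).map N.subtype = γ.series G j ⊓ N := by
  induction j with
  | zero => rw [γ.series_zero, γ.series_zero, Subgroup.map_bot, bot_inf_eq]
  | succ n ih =>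
    haveI := hN
    haveI hSn := γ.series_normal G n
    haveI hSN := γ.series_normal ↥N n
    set K := γ.series G n with hK
    set π := QuotientGroup.mk' K with hπ
    set Nbar := N.map π with hNbar
    haveI hNbarN : Nbar.Normal := hN.map π (QuotientGroup.mk'_surjective K)
    have hmem : ∀ x : ↥N, π (N.subtype x) ∈ Nbar := fun x => ⟨x, x.2, rfl⟩
    set φ : ↥N →* ↥Nbar := (π.comp N.subtype).codRestrict Nbar (fun x => hmem x) with hφ
    have hφs : Function.Surjective φ := by
      rintro ⟨y, hy⟩
      obtain ⟨x, hx, rfl⟩ := hy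
      exact ⟨⟨x, hx⟩, rfl⟩
    have hker : φ.ker = γ.series ↥N n := by
      ext x
      have h1 : (x ∈ φ.ker) ↔ π ↑x = 1 := by
        constructor
        · intro hx; exact congrArg Subtype.val hx
        · intro hx; exact Subtype.ext hx
      rw [h1, hπ, QuotientGroup.mk'_apply, QuotientGroup.eq_one_iff]
      constructor
      · intro hx
        have h2 : (↑x : G) ∈ K ⊓ N := ⟨hx, x.2⟩
        rw [← ih] at h2
        obtain ⟨y, hy, hyx⟩ := h2
        have : y = x := Subtype.coe_injective hyx
        rwa [this] at hy
      · intro hx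
        have h2 : (↑x : G) ∈ (γ.series ↥N n).map N.subtype := ⟨x, hx, rfl⟩
        rw [ih] at h2; exact h2.1
    set e := (QuotientGroup.quotientMulEquivOfEq hker.symm).trans
      (QuotientGroup.quotientKerEquivOfSurjective φ hφs) with he
    have heapp : ∀ x : ↥N, e ((QuotientGroup.mk' (γ.series ↥N n)) x) = φ x := fun x => rfl
    have hiso := γ.map_iso _ _ e
    have hP2 := γ.inf_eq (G ⧸ K) Nbar hNbarN
    rw [γ.series_succ' G n K hSn hK, γ.series_succ' ↥N n _ hSN rfl]
    ext x
    constructor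
    · rintro ⟨y, hy, rfl⟩
      refine ⟨?_, y.2⟩
      have h2 : (QuotientGroup.mk' (γ.series ↥N n)) y ∈ γ.sub (↥N ⧸ γ.series ↥N n) :=
        Subgroup.mem_comap.mp hy
      have h3 : φ y ∈ (γ.sub (↥N ⧸ γ.series ↥N n)).map e.toMonoidHom := ⟨_, h2, heapp y⟩
      rw [hiso] at h3
      have h4 : (↑(φ y) : G ⧸ K) ∈ (γ.sub ↥Nbar).map Nbar.subtype := ⟨φ y, h3, rfl⟩
      rw [← hP2] at h4
      exact Subgroup.mem_comap.mpr h4.1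
    · rintro ⟨hx1, hx2⟩
      refine ⟨⟨x, hx2⟩, ?_, rfl⟩
      have h2 : π x ∈ γ.sub (G ⧸ K) ⊓ Nbar := ⟨Subgroup.mem_comap.mp hx1, ⟨x, hx2, rfl⟩⟩
      rw [hP2] at h2
      obtain ⟨z, hz, hzx⟩ := h2
      have hzphi : z = φ ⟨x, hx2⟩ := Subtype.ext hzx
      rw [hzphi] at hz
      rw [← hiso] at hz
      obtain ⟨w, hw, hwz⟩ := hz
      have hw' : w = (QuotientGroup.mk' (γ.series ↥N n)) ⟨x, hx2⟩ := by
        apply e.injective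
        have hwz' : e w = φ ⟨x, hx2⟩ := hwz
        rw [hwz', heapp]
      rw [hw'] at hw
      exact Subgroup.mem_comap.mpr hw

lemma length_ne_top_of_normal (G : Type) [Group G] [Finite G] (N : Subgroup G) (hN : N.Normal)
    (hG : γ.length G ≠ ⊤) : γ.length ↥N ≠ ⊤ := by
  obtain ⟨h, hh⟩ := (γ.length_ne_top_iff G).mp hG
  refine (γ.length_ne_top_iff ↥N).mpr ⟨h, ?_⟩
  have h1 := γ.series_inf G N hN h
  rw [hh, top_inf_eq] at h1
  have h2 : (γ.series ↥N h).map N.subtype = (⊤ : Subgroup ↥N).map N.subtype := by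
    rw [h1, map_subtype_top]
  exact Subgroup.map_injective N.subtype_injective h2

end PlotkinRadical

/-! ### Relative normality and the relative radical -/

def NormalIn {G : Type*} [Group G] (A B : Subgroup G) : Prop :=
  A ≤ B ∧ ∀ b ∈ B, ∀ a ∈ A, b * a * b⁻¹ ∈ A

lemma normalIn_refl {G : Type*} [Group G] (A : Subgroup G) : NormalIn A A :=
  ⟨le_rfl, fun b hb a ha => A.mul_mem (A.mul_mem hb ha) (A.inv_mem hb)⟩

lemma NormalIn.of_normal {G : Type*} [Group G] {A B : Subgroup G} (hA : A.Normal)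
    (hle : A ≤ B) : NormalIn A B :=
  ⟨hle, fun b _ a ha => hA.conj_mem a ha b⟩

lemma NormalIn.normal_of_top {G : Type*} [Group G] {A : Subgroup G}
    (h : NormalIn A ⊤) : A.Normal :=
  ⟨fun a ha g => h.2 g trivial a ha⟩

lemma NormalIn.subgroupOf_normal {G : Type*} [Group G] {A B : Subgroup G}
    (h : NormalIn A B) : (A.subgroupOf B).Normal := by
  constructor
  rintro ⟨n, hnB⟩ hn ⟨g, hgB⟩
  rw [Subgroup.mem_subgroupOf] at hn ⊢
  exact h.2 g hgB n hn

lemma normalIn_sup {G : Type*} [Group G] {A B C : Subgroup G}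
    (hA : NormalIn A C) (hB : NormalIn B C) : NormalIn (A ⊔ B) C := by
  refine ⟨sup_le hA.1 hB.1, fun c hc x hx => ?_⟩
  revert x
  have : A ⊔ B ≤ ((A ⊔ B) : Subgroup G).comap ((MulAut.conj c).toMonoidHom) := by
    apply sup_le
    · intro a ha
      exact Subgroup.mem_comap.mpr (Subgroup.mem_sup_left (hA.2 c hc a ha))
    · intro b hb
      exact Subgroup.mem_comap.mpr (Subgroup.mem_sup_right (hB.2 c hc b hb))
  intro x hx
  have := this hx
  rw [Subgroup.mem_comap] at this
  simpa using this

lemma subnormal_top {G : Type*} [Group G] : Subnormal (⊤ : Subgroup G) :=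
  ⟨0, fun _ => ⊤, rfl, rfl, fun i => i.elim0⟩

lemma Subnormal.of_normalIn {G : Type*} [Group G] {A B : Subgroup G}
    (hAB : NormalIn A B) (hB : Subnormal B) : Subnormal A := by
  obtain ⟨n, c, hc0, hlast, hstep⟩ := hB
  refine ⟨n + 1, Fin.cons A c, by simp, ?_, ?_⟩
  · rw [← Fin.succ_last, Fin.cons_succ, hlast]
  · intro i
    induction i using Fin.cases with
    | zero =>
      constructor
      · simp only [Fin.castSucc_zero, Fin.cons_zero, Fin.cons_succ, hc0]
        exact hAB.1
      · intro x hx y hy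
        simp only [Fin.castSucc_zero, Fin.cons_zero, Fin.cons_succ, hc0] at hx hy ⊢
        exact hAB.2 y hy x hx
    | succ j =>
      constructor
      · simp only [← Fin.succ_castSucc, Fin.cons_succ]
        exact (hstep j).1
      · intro x hx y hy
        simp only [← Fin.succ_castSucc, Fin.cons_succ] at hx hy ⊢
        exact (hstep j).2 x hx y hy

namespace PlotkinRadical

variable (γ : PlotkinRadical)

variable {K : Type} [Group K] [Finite K]

/-- The radical of a subgroup, as a subgroup of the ambient group. -/
def gam (A : Subgroup K) : Subgroup K := (γ.sub ↥A).map A.subtype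

lemma gam_le (A : Subgroup K) : γ.gam A ≤ A := by
  rintro x ⟨y, _, rfl⟩; exact y.2

lemma gam_top : γ.gam (⊤ : Subgroup K) = γ.sub K := by
  have hiso := γ.map_iso _ _ (Subgroup.topEquiv (G := K))
  have hc : (⊤ : Subgroup K).subtype = (Subgroup.topEquiv (G := K)).toMonoidHom :=
    MonoidHom.ext fun x => rfl
  show (γ.sub ↥(⊤ : Subgroup K)).map (⊤ : Subgroup K).subtype = γ.sub K
  rw [hc, hiso]

/-- Conjugation by an element normalizing `A`, as an automorphism of `A`. -/
def conjEquiv {G : Type*} [Group G] (A : Subgroup G) (g : G) (hg : ∀ a ∈ A, g * a * g⁻¹ ∈ A)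
    (hg' : ∀ a ∈ A, g⁻¹ * a * g ∈ A) : ↥A ≃* ↥A where
  toFun a := ⟨g * a * g⁻¹, hg a a.2⟩
  invFun a := ⟨g⁻¹ * a * g, hg' a a.2⟩
  left_inv a := by ext; simp [mul_assoc]
  right_inv a := by ext; simp [mul_assoc]
  map_mul' a b := by ext; simp [mul_assoc]

lemma gam_conj_mem (A : Subgroup K) (g : K) (hg : ∀ a ∈ A, g * a * g⁻¹ ∈ A)
    (hg' : ∀ a ∈ A, g⁻¹ * a * g ∈ A) {x : K} (hx : x ∈ γ.gam A) : g * x * g⁻¹ ∈ γ.gam A := by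
  obtain ⟨y, hy, rfl⟩ := hx
  have hiso := γ.map_iso ↥A ↥A (conjEquiv A g hg hg')
  have h2 : conjEquiv A g hg hg' y ∈ γ.sub ↥A := by
    rw [← hiso]; exact ⟨y, hy, rfl⟩
  exact ⟨_, h2, rfl⟩

lemma normalIn_gam {A B : Subgroup K} (h : NormalIn A B) : NormalIn (γ.gam A) B := by
  constructor
  · exact (γ.gam_le A).trans h.1
  · intro b hb x hx
    refine γ.gam_conj_mem A b (fun a ha => h.2 b hb a ha) (fun a ha => ?_) hx
    have := h.2 b⁻¹ (B.inv_mem hb) a ha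
    simpa using this

lemma gam_inf {A B : Subgroup K} (h : NormalIn A B) : γ.gam B ⊓ A = γ.gam A := by
  have hN : (A.subgroupOf B).Normal := h.subgroupOf_normal
  have hP2 := γ.inf_eq ↥B (A.subgroupOf B) hN
  have hmap := congrArg (Subgroup.map B.subtype) hP2
  rw [Subgroup.map_inf _ _ _ B.subtype_injective, subgroupOf_map_subtype,
    Subgroup.map_map] at hmap
  have hAB : A ⊓ B = A := inf_of_le_left h.1
  rw [hAB] at hmap
  have hiso := γ.map_iso _ _ (Subgroup.subgroupOfEquivOfLe h.1)
  have hcomp : B.subtype.comp (A.subgroupOf B).subtype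
      = A.subtype.comp (Subgroup.subgroupOfEquivOfLe h.1).toMonoidHom :=
    MonoidHom.ext fun x => rfl
  rw [hcomp, ← Subgroup.map_map, hiso] at hmap
  exact hmap

lemma gam_idem (A : Subgroup K) : γ.gam (γ.gam A) = γ.gam A := by
  have h1 : NormalIn (γ.gam A) A := γ.normalIn_gam (normalIn_refl A)
  have h2 := γ.gam_inf h1
  rw [inf_idem] at h2
  exact h2.symm

lemma gam_mono_of_normalIn {A B : Subgroup K} (h : NormalIn A B) : γ.gam A ≤ γ.gam B := by
  have h2 := γ.gam_inf (γ.normalIn_gam h)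
  rw [γ.gam_idem] at h2
  exact inf_eq_right.mp h2

lemma le_sub_of_subnormal (A : Subgroup K) (hA : Subnormal A) (hrad : γ.sub ↥A = ⊤) :
    A ≤ γ.sub K := by
  obtain ⟨n, c, hc0, hlast, hstep⟩ := hA
  have hgamA : γ.gam A = A := by
    show (γ.sub ↥A).map A.subtype = A
    rw [hrad, map_subtype_top]
  have key : ∀ i : Fin (n+1), A ≤ γ.gam (c i) := by
    intro i
    induction i using Fin.induction with
    | zero => rw [hc0, hgamA]
    | succ j ih =>
      exact ih.trans (γ.gam_mono_of_normalIn
        ⟨(hstep j).1, fun b hb a ha => (hstep j).2 a ha b hb⟩)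
  have h3 := key (Fin.last n)
  rwa [hlast, γ.gam_top] at h3

lemma length_ne_top_of_subnormal (A : Subgroup K) (hA : Subnormal A)
    (hK : γ.length K ≠ ⊤) : γ.length ↥A ≠ ⊤ := by
  obtain ⟨n, c, hc0, hlast, hstep⟩ := hA
  have key : ∀ i : Fin (n+1), γ.length ↥(c i) ≠ ⊤ := by
    intro i
    induction i using Fin.reverseInduction with
    | last => rw [hlast]; exact γ.length_ne_top_congr K ↥(⊤ : Subgroup K) Subgroup.topEquiv.symm hK
    | cast j ih =>
      have hNin : NormalIn (c j.castSucc) (c j.succ) :=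
        ⟨(hstep j).1, fun b hb a ha => (hstep j).2 a ha b hb⟩
      have h1 := γ.length_ne_top_of_normal ↥(c j.succ) _ hNin.subgroupOf_normal ih
      exact γ.length_ne_top_congr _ _ (Subgroup.subgroupOfEquivOfLe (hstep j).1) h1
  have := key 0
  rwa [hc0] at this

end PlotkinRadical

lemma exists_minimal_mem {K : Type} [Group K] [Finite K] (S : Set (Subgroup K))
    {T₀ : Subgroup K} (h0 : T₀ ∈ S) :
    ∃ T ∈ S, T ≤ T₀ ∧ ∀ T', T' ∈ S → T' ≤ T → T' = T := by
  have main : ∀ (n : ℕ) (T₁ : Subgroup K), Nat.card ↥T₁ ≤ n → T₁ ∈ S →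
      ∃ T ∈ S, T ≤ T₁ ∧ ∀ T', T' ∈ S → T' ≤ T → T' = T := by
    intro n
    induction n with
    | zero =>
      intro T₁ hc h1
      have : 0 < Nat.card ↥T₁ := Nat.card_pos
      omega
    | succ n ih =>
      intro T₁ hc h1
      by_cases hmin : ∀ T', T' ∈ S → T' ≤ T₁ → T' = T₁
      · exact ⟨T₁, h1, le_rfl, hmin⟩
      · push_neg at hmin
        obtain ⟨T', hT'S, hT'le, hT'ne⟩ := hmin
        have hlt : Nat.card ↥T' < Nat.card ↥T₁ := by
          have hss : (T' : Set K) ⊂ (T₁ : Set K) := by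
            refine ⟨hT'le, fun hsub => hT'ne (le_antisymm hT'le fun x hx => hsub hx)⟩
          have := Set.ncard_lt_ncard hss (Set.toFinite _)
          rw [← Nat.card_coe_set_eq, ← Nat.card_coe_set_eq] at this
          exact this
        obtain ⟨T, hTS, hTle, hTmin⟩ := ih T' (by omega) hT'S
        exact ⟨T, hTS, hTle.trans hT'le, hTmin⟩
  exact main (Nat.card ↥T₀) T₀ le_rfl h0

/-! ### Transfer lemmas along isomorphisms -/

lemma map_symm_map {G H : Type*} [Group G] [Group H] (e : G ≃* H) (N : Subgroup H) :
    (N.map e.symm.toMonoidHom).map e.toMonoidHom = N := by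
  rw [Subgroup.map_map]
  have h : e.toMonoidHom.comp e.symm.toMonoidHom = MonoidHom.id H :=
    MonoidHom.ext fun x => e.apply_symm_apply x
  rw [h, Subgroup.map_id]

lemma map_equiv_top {G H : Type*} [Group G] [Group H] (e : G ≃* H) :
    (⊤ : Subgroup G).map e.toMonoidHom = ⊤ := by
  rw [← MonoidHom.range_eq_map]
  exact MonoidHom.range_eq_top.mpr e.surjective

lemma isSimpleGroup_congr {G H : Type*} [Group G] [Group H] (e : G ≃* H)
    (hG : IsSimpleGroup G) : IsSimpleGroup H := by
  haveI : Nontrivial G := hG.toNontrivial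
  haveI : Nontrivial H := e.symm.toEquiv.nontrivial
  refine ⟨fun N hN => ?_⟩
  have hN' := hN.map e.symm.toMonoidHom e.symm.surjective
  rcases hG.eq_bot_or_eq_top_of_normal _ hN' with h | h
  · left
    have h2 := congrArg (Subgroup.map e.toMonoidHom) h
    rwa [map_symm_map, Subgroup.map_bot] at h2
  · right
    have h2 := congrArg (Subgroup.map e.toMonoidHom) h
    rwa [map_symm_map, _root_.map_equiv_top] at h2

lemma map_equiv_center {G H : Type*} [Group G] [Group H] (e : G ≃* H) :
    (Subgroup.center G).map e.toMonoidHom = Subgroup.center H := by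
  ext y
  constructor
  · rintro ⟨x, hx, rfl⟩
    rw [Subgroup.mem_center_iff]
    intro h
    obtain ⟨g, rfl⟩ := e.surjective h
    show e g * e x = e x * e g
    rw [← map_mul, ← map_mul, Subgroup.mem_center_iff.mp hx g]
  · intro hy
    obtain ⟨x, rfl⟩ := e.surjective y
    refine ⟨x, ?_, rfl⟩
    show x ∈ Subgroup.center G
    rw [Subgroup.mem_center_iff]
    intro g
    have h2 := Subgroup.mem_center_iff.mp hy (e g)
    apply e.injective
    rw [map_mul, map_mul]
    exact h2

lemma isQuasisimple_congr {G H : Type*} [Group G] [Group H] (e : G ≃* H)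
    (h : IsQuasisimple G) : IsQuasisimple H := by
  obtain ⟨hcomm, hsimple⟩ := h
  constructor
  · have h1 : Subgroup.map e.toMonoidHom (commutator G) = commutator H := by
      rw [_root_.commutator_def, _root_.commutator_def, Subgroup.map_commutator, _root_.map_equiv_top]
    rw [← h1, hcomm, _root_.map_equiv_top]
  · have hc : Subgroup.map e.toMonoidHom (Subgroup.center G) = Subgroup.center H :=
      map_equiv_center e
    exact isSimpleGroup_congr
      (QuotientGroup.congr (Subgroup.center G) (Subgroup.center H) e hc) hsimple

/-! ### `genFitting` is everything for nilpotent, quasisimple and simple groups -/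

lemma fittingSub_eq_top_of_nilpotent (Q : Type*) [Group Q] (h : Group.IsNilpotent Q) :
    fittingSub Q = ⊤ := by
  haveI := h
  exact eq_top_iff.mpr (le_sSup ⟨inferInstance, Subgroup.isNilpotent ⊤⟩)

lemma layer_eq_top_of_quasisimple (Q : Type*) [Group Q] (h : IsQuasisimple Q) :
    layer Q = ⊤ :=
  eq_top_iff.mpr (le_sSup ⟨subnormal_top, isQuasisimple_congr Subgroup.topEquiv.symm h⟩)

lemma genFitting_eq_top_of_nilpotent (Q : Type*) [Group Q] (h : Group.IsNilpotent Q) :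
    genFitting Q = ⊤ :=
  eq_top_iff.mpr ((fittingSub_eq_top_of_nilpotent Q h) ▸ (le_sup_left : fittingSub Q ≤ genFitting Q))

lemma genFitting_eq_top_of_quasisimple (Q : Type*) [Group Q] (h : IsQuasisimple Q) :
    genFitting Q = ⊤ :=
  eq_top_iff.mpr ((layer_eq_top_of_quasisimple Q h) ▸ (le_sup_right : layer Q ≤ genFitting Q))

lemma genFitting_eq_top_of_simple (Q : Type*) [Group Q] (hs : IsSimpleGroup Q) :
    genFitting Q = ⊤ := by
  by_cases hab : ∀ x y : Q, x * y = y * x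
  · refine genFitting_eq_top_of_nilpotent Q ⟨1, ?_⟩
    rw [Subgroup.upperCentralSeries_one, eq_top_iff]
    intro x _
    exact Subgroup.mem_center_iff.mpr fun g => hab g x
  · push_neg at hab
    obtain ⟨x, y, hxy⟩ := hab
    have hcomm : commutator Q = ⊤ := by
      rcases hs.eq_bot_or_eq_top_of_normal (commutator Q) inferInstance with h | h
      · exfalso
        apply hxy
        have h1 : ⁅x, y⁆ ∈ commutator Q :=
          Subgroup.commutator_mem_commutator (Subgroup.mem_top x) (Subgroup.mem_top y)
        rw [h] at h1
        exact (commutatorElement_eq_one_iff_commute.mp (Subgroup.mem_bot.mp h1))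
      · exact h
    have hcen : Subgroup.center Q = ⊥ := by
      rcases hs.eq_bot_or_eq_top_of_normal (Subgroup.center Q) inferInstance with h | h
      · exact h
      · exfalso
        apply hxy
        have h1 : x ∈ Subgroup.center Q := by rw [h]; trivial
        exact (Subgroup.mem_center_iff.mp h1 y).symm
    refine genFitting_eq_top_of_quasisimple Q ⟨hcomm, ?_⟩
    haveI := hs
    have e : Q ⧸ Subgroup.center Q ≃* Q :=
      (QuotientGroup.quotientMulEquivOfEq hcen).trans QuotientGroup.quotientBot
    exact isSimpleGroup_congr e.symm hs

/-! ### Conjugation stability helpers -/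

lemma conj_map_self {G : Type*} [Group G] (A : Subgroup G) (g : G)
    (h : ∀ a ∈ A, g * a * g⁻¹ ∈ A) (h' : ∀ a ∈ A, g⁻¹ * a * g ∈ A) :
    Subgroup.map (MulAut.conj g).toMonoidHom A = A := by
  apply le_antisymm
  · rintro _ ⟨a, ha, rfl⟩
    simpa using h a ha
  · intro a ha
    refine ⟨g⁻¹ * a * g, h' a ha, ?_⟩
    show g * (g⁻¹ * a * g) * g⁻¹ = a
    group

lemma normalIn_commutator {G : Type*} [Group G] {A B : Subgroup G} (h : NormalIn A B) :
    NormalIn ⁅A, A⁆ B := by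
  have hle : ⁅A, A⁆ ≤ A := Subgroup.commutator_le.mpr fun a ha b hb => by
    rw [commutatorElement_def]
    exact A.mul_mem (A.mul_mem (A.mul_mem ha hb) (A.inv_mem ha)) (A.inv_mem hb)
  refine ⟨hle.trans h.1, ?_⟩
  intro b hb x hx
  have hmapA : Subgroup.map (MulAut.conj b).toMonoidHom A = A :=
    conj_map_self A b (fun a ha => h.2 b hb a ha)
      (fun a ha => by simpa using h.2 b⁻¹ (B.inv_mem hb) a ha)
  have h1 : Subgroup.map (MulAut.conj b).toMonoidHom ⁅A, A⁆ = ⁅A, A⁆ := by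
    rw [Subgroup.map_commutator, hmapA]
  have h2 : (MulAut.conj b) x ∈ Subgroup.map (MulAut.conj b).toMonoidHom ⁅A, A⁆ := ⟨x, hx, rfl⟩
  rw [h1] at h2
  simpa using h2

namespace PlotkinRadical

variable (γ : PlotkinRadical)

/-- Abbreviation for the hypothesis `F*(G) ≤ γ(G)` for groups of finite `γ`-length. -/
def FStarLe : Prop :=
  ∀ (G : Type) [Group G] [Finite G], γ.length G ≠ ⊤ → genFitting G ≤ γ.sub G

lemma sub_eq_top_of_nilpotent (hγF : γ.FStarLe) (Q : Type) [Group Q] [Finite Q]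
    (hlen : γ.length Q ≠ ⊤) (hnil : Group.IsNilpotent Q) : γ.sub Q = ⊤ :=
  eq_top_iff.mpr ((genFitting_eq_top_of_nilpotent Q hnil) ▸ hγF Q hlen)

lemma sub_eq_top_of_quasisimple (hγF : γ.FStarLe) (Q : Type) [Group Q] [Finite Q]
    (hlen : γ.length Q ≠ ⊤) (hq : IsQuasisimple Q) : γ.sub Q = ⊤ :=
  eq_top_iff.mpr ((genFitting_eq_top_of_quasisimple Q hq) ▸ hγF Q hlen)

lemma sub_eq_top_of_simple (hγF : γ.FStarLe) (Q : Type) [Group Q] [Finite Q]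
    (hlen : γ.length Q ≠ ⊤) (hs : IsSimpleGroup Q) : γ.sub Q = ⊤ :=
  eq_top_iff.mpr ((genFitting_eq_top_of_simple Q hs) ▸ hγF Q hlen)

end PlotkinRadical

namespace PlotkinRadical

variable (γ : PlotkinRadical)

/-- If `K ≠ 1` has finite `γ`-length then `γ(K) ≠ 1`. -/
lemma sub_ne_bot (hγF : γ.FStarLe) (K : Type) [Group K] [Finite K] (hnt : Nontrivial K)
    (hK : γ.length K ≠ ⊤) : γ.sub K ≠ ⊥ := by
  haveI := hnt
  set S : Set (Subgroup K) := {A | A ≠ ⊥ ∧ Subnormal A} with hS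
  have htopS : (⊤ : Subgroup K) ∈ S := by
    constructor
    · obtain ⟨x, hx⟩ := exists_ne (1 : K)
      intro h
      exact hx (Subgroup.mem_bot.mp (h ▸ Subgroup.mem_top x))
    · exact subnormal_top
  obtain ⟨L, hLS, -, hLmin⟩ := exists_minimal_mem S htopS
  obtain ⟨hLne, hLsub⟩ := hLS
  have hdich : ∀ A : Subgroup K, NormalIn A L → A = ⊥ ∨ A = L := by
    intro A hA
    by_cases hA0 : A = ⊥
    · exact Or.inl hA0
    · exact Or.inr (hLmin A ⟨hA0, Subnormal.of_normalIn hA hLsub⟩ hA.1)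
  have hlen : γ.length ↥L ≠ ⊤ := γ.length_ne_top_of_subnormal L hLsub hK
  have hrad : γ.sub ↥L = ⊤ := by
    rcases hdich ⁅L, L⁆ (normalIn_commutator (normalIn_refl L)) with hc | hc
    · -- L abelian, hence nilpotent
      refine γ.sub_eq_top_of_nilpotent hγF ↥L hlen ⟨1, ?_⟩
      rw [Subgroup.upperCentralSeries_one, eq_top_iff]
      intro x _
      rw [Subgroup.mem_center_iff]
      intro g
      apply Subtype.ext
      have h1 : ⁅(g : K), (x : K)⁆ ∈ ⁅L, L⁆ := Subgroup.commutator_mem_commutator g.2 x.2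
      rw [hc] at h1
      have := commutatorElement_eq_one_iff_commute.mp (Subgroup.mem_bot.mp h1)
      simpa using this.eq
    · -- L perfect; show quasisimple
      set Cl := Subgroup.centralizer (L : Set K) ⊓ L with hCl
      have hClL : NormalIn Cl L := by
        refine ⟨inf_le_right, ?_⟩
        intro b hb a ha
        refine ⟨?_, L.mul_mem (L.mul_mem hb ha.2) (L.inv_mem hb)⟩
        show b * a * b⁻¹ ∈ Subgroup.centralizer (L : Set K)
        rw [Subgroup.mem_centralizer_iff]
        intro h hh
        have hh' : b⁻¹ * h * b ∈ L := by
          have := L.mul_mem (L.mul_mem (L.inv_mem hb) hh) hb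
          simpa [mul_assoc] using this
        have h2 := Subgroup.mem_centralizer_iff.mp ha.1 _ hh'
        calc h * (b * a * b⁻¹) = b * ((b⁻¹ * h * b) * a) * b⁻¹ := by group
        _ = b * (a * (b⁻¹ * h * b)) * b⁻¹ := by rw [h2]
        _ = (b * a * b⁻¹) * h := by group
      have hClbot : Cl = ⊥ := by
        rcases hdich Cl hClL with h | h
        · exact h
        · exfalso
          have habel : ⁅L, L⁆ = ⊥ := by
            rw [eq_bot_iff]
            refine Subgroup.commutator_le.mpr fun g1 h1 g2 h2 => ?_
            have hg1 : g1 ∈ Cl := h ▸ h1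
            have := Subgroup.mem_centralizer_iff.mp hg1.1 g2 h2
            rw [Subgroup.mem_bot, commutatorElement_eq_one_iff_commute]
            exact this.symm
          rw [hc] at habel
          exact hLne habel
      have hcommL : commutator ↥L = ⊤ := by
        have h1 : Subgroup.map L.subtype (commutator ↥L) = ⁅L, L⁆ := by
          rw [_root_.commutator_def, Subgroup.map_commutator, map_subtype_top]
        apply Subgroup.map_injective L.subtype_injective
        rw [h1, map_subtype_top, hc]
      have hcenL : Subgroup.center ↥L = ⊥ := by
        rw [eq_bot_iff]
        intro z hz
        have h1 : (z : K) ∈ Cl := by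
          refine ⟨?_, z.2⟩
          show (z : K) ∈ Subgroup.centralizer (L : Set K)
          rw [Subgroup.mem_centralizer_iff]
          intro h hh
          have := Subgroup.mem_center_iff.mp hz ⟨h, hh⟩
          exact congrArg Subtype.val this
        rw [hClbot] at h1
        rw [Subgroup.mem_bot]
        exact Subtype.ext (Subgroup.mem_bot.mp h1)
      have hsimpleL : IsSimpleGroup ↥L := by
        haveI : Nontrivial ↥L := Subgroup.nontrivial_iff_ne_bot L |>.mpr hLne
        refine ⟨fun N hN => ?_⟩
        have hNin : NormalIn (N.map L.subtype) L := by
          constructor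
          · rintro _ ⟨a, _, rfl⟩; exact a.2
          · intro b hb a ha
            obtain ⟨a', ha', rfl⟩ := ha
            exact ⟨⟨b, hb⟩ * a' * ⟨b, hb⟩⁻¹, hN.conj_mem a' ha' ⟨b, hb⟩, rfl⟩
        rcases hdich _ hNin with h | h
        · left
          apply Subgroup.map_injective L.subtype_injective
          rw [h, Subgroup.map_bot]
        · right
          apply Subgroup.map_injective L.subtype_injective
          rw [h, map_subtype_top]
      refine γ.sub_eq_top_of_quasisimple hγF ↥L hlen ⟨hcommL, ?_⟩
      have e : ↥L ⧸ Subgroup.center ↥L ≃* ↥L :=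
        (QuotientGroup.quotientMulEquivOfEq hcenL).trans QuotientGroup.quotientBot
      exact isSimpleGroup_congr e.symm hsimpleL
  have hLle := γ.le_sub_of_subnormal L hLsub hrad
  intro hbot
  rw [hbot] at hLle
  exact hLne (le_bot_iff.mp hLle)

end PlotkinRadical

open scoped Pointwise

namespace PlotkinRadical

variable (γ : PlotkinRadical)

/-- If the radical of `K` is central, then `K` equals its radical. -/
lemma sub_eq_top_of_central (hγF : γ.FStarLe) (K : Type) [Group K] [Finite K]
    (hK : γ.length K ≠ ⊤) (hcent : γ.sub K ≤ Subgroup.center K) : γ.sub K = ⊤ := by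
  by_contra hne
  set Z := γ.sub K with hZ
  haveI hZN : Z.Normal := γ.normal K
  set S : Set (Subgroup K) := {T | Z < T ∧ Subnormal T} with hS
  have htopS : (⊤ : Subgroup K) ∈ S := ⟨lt_top_iff_ne_top.mpr hne, subnormal_top⟩
  obtain ⟨T, hTS, -, hTmin⟩ := exists_minimal_mem S htopS
  obtain ⟨hZT, hTsub⟩ := hTS
  have hZleT : Z ≤ T := le_of_lt hZT
  have hZinT : NormalIn Z T := NormalIn.of_normal hZN hZleT
  have hlenT : γ.length ↥T ≠ ⊤ := γ.length_ne_top_of_subnormal T hTsub hK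
  have hdich : ∀ A : Subgroup K, NormalIn A T → Z ≤ A → A = Z ∨ A = T := by
    intro A hA hZA
    by_cases h0 : A = Z
    · exact Or.inl h0
    · exact Or.inr (hTmin A ⟨lt_of_le_of_ne hZA (Ne.symm h0), Subnormal.of_normalIn hA hTsub⟩ hA.1)
  set π := QuotientGroup.mk' Z with hπ
  have hmapbot : ∀ X : Subgroup K, Subgroup.map π X = ⊥ ↔ X ≤ Z := by
    intro X
    constructor
    · intro h x hx
      have h1 : π x ∈ Subgroup.map π X := ⟨x, hx, rfl⟩
      rw [h, Subgroup.mem_bot] at h1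
      exact (QuotientGroup.eq_one_iff x).mp h1
    · intro h
      rw [eq_bot_iff]
      rintro _ ⟨x, hx, rfl⟩
      exact Subgroup.mem_bot.mpr ((QuotientGroup.eq_one_iff x).mpr (h hx))
  by_cases hcase : ⁅T, T⁆ ≤ Z
  · -- T is nilpotent of class ≤ 2
    have hnil : Group.IsNilpotent ↥T := by
      refine ⟨2, ?_⟩
      rw [eq_top_iff]
      intro x _
      rw [show (2 : ℕ) = 1 + 1 from rfl, Subgroup.mem_upperCentralSeries_succ_iff]
      intro y
      rw [Subgroup.upperCentralSeries_one]
      have hmem : ((x * y * x⁻¹ * y⁻¹ : ↥T) : K) ∈ Z := by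
        have h0 : (⁅(x : K), (y : K)⁆) ∈ ⁅T, T⁆ := Subgroup.commutator_mem_commutator x.2 y.2
        have h1 := hcase h0
        rw [commutatorElement_def] at h1
        simpa using h1
      rw [Subgroup.mem_center_iff]
      intro g
      apply Subtype.ext
      have := Subgroup.mem_center_iff.mp (hcent hmem) (g : K)
      simpa [commutatorElement_def] using this
    have hrad : γ.sub ↥T = ⊤ := γ.sub_eq_top_of_nilpotent hγF ↥T hlenT hnil
    have hle := γ.le_sub_of_subnormal T hTsub hrad
    exact absurd (lt_of_lt_of_le hZT hle) (lt_irrefl Z)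
  · -- T is perfect modulo Z
    have hTT : NormalIn ⁅T, T⁆ T := normalIn_commutator (normalIn_refl T)
    have hE : ⁅T, T⁆ ⊔ Z = T := by
      rcases hdich (⁅T, T⁆ ⊔ Z) (normalIn_sup hTT hZinT) le_sup_right with h | h
      · exact absurd (le_sup_left.trans (le_of_eq h)) hcase
      · exact h
    set D : ℕ → Subgroup K := fun n => (fun A => ⁅A, A⁆)^[n] T with hD
    have hDsucc : ∀ n, D (n + 1) = ⁅D n, D n⁆ := by
      intro n
      show (fun A => ⁅A, A⁆)^[n + 1] T = _
      rw [Function.iterate_succ_apply']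
    have hDmono : ∀ (A : Subgroup K), ⁅A, A⁆ ≤ A := fun A =>
      Subgroup.commutator_le.mpr fun a ha b hb => by
        rw [commutatorElement_def]
        exact A.mul_mem (A.mul_mem (A.mul_mem ha hb) (A.inv_mem ha)) (A.inv_mem hb)
    have hDnormal : ∀ n, NormalIn (D n) T := by
      intro n
      induction n with
      | zero => exact normalIn_refl T
      | succ n ih => rw [hDsucc]; exact normalIn_commutator ih
    have hDbar : ∀ n, Subgroup.map π (D n) = Subgroup.map π T := by
      intro n
      induction n with
      | zero => rfl
      | succ n ih =>
        have h1 : Subgroup.map π Z = ⊥ := (hmapbot Z).mpr le_rfl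
        have h2 : Subgroup.map π ⁅T, T⁆ = Subgroup.map π T := by
          calc Subgroup.map π ⁅T, T⁆ = Subgroup.map π ⁅T, T⁆ ⊔ Subgroup.map π Z := by
                rw [h1, sup_bot_eq]
          _ = Subgroup.map π (⁅T, T⁆ ⊔ Z) := (Subgroup.map_sup _ _ _).symm
          _ = Subgroup.map π T := by rw [hE]
        rw [hDsucc, Subgroup.map_commutator, ih, ← Subgroup.map_commutator]
        exact h2
    have hDsupZ : ∀ n, D n ⊔ Z = T := by
      intro n
      have h1 : Subgroup.comap π (Subgroup.map π (D n)) = D n ⊔ Z := by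
        rw [comap_map_eq, hπ, QuotientGroup.ker_mk']
      have h2 : Subgroup.comap π (Subgroup.map π T) = T ⊔ Z := by
        rw [comap_map_eq, hπ, QuotientGroup.ker_mk']
      rw [← h1, hDbar n, h2, sup_of_le_left hZleT]
    have hstab : ∃ n, D (n + 1) = D n := by
      by_contra hall
      push_neg at hall
      have hdec : ∀ n, Nat.card ↥(D (n + 1)) < Nat.card ↥(D n) := by
        intro n
        have hle : D (n + 1) ≤ D n := by rw [hDsucc]; exact hDmono _
        have hss : ((D (n + 1)) : Set K) ⊂ (D n : Set K) :=
          ⟨hle, fun hsub => hall n (le_antisymm hle fun x hx => hsub hx)⟩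
        have := Set.ncard_lt_ncard hss (Set.toFinite _)
        rw [← Nat.card_coe_set_eq, ← Nat.card_coe_set_eq] at this
        exact this
      have hmono2 : ∀ n, Nat.card ↥(D n) + n ≤ Nat.card ↥(D 0) := by
        intro n
        induction n with
        | zero => omega
        | succ n ih => have := hdec n; omega
      have := hmono2 (Nat.card ↥(D 0) + 1)
      omega
    obtain ⟨n₀, hn₀⟩ := hstab
    set P := D n₀ with hP
    have hPperf : ⁅P, P⁆ = P := by rw [← hDsucc n₀, hn₀]
    have hPT : NormalIn P T := hDnormal n₀
    have hPsupZ : P ⊔ Z = T := hDsupZ n₀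
    have hPsub : Subnormal P := Subnormal.of_normalIn hPT hTsub
    have hPne : P ≠ ⊥ := by
      intro h
      rw [h, bot_sup_eq] at hPsupZ
      exact absurd hPsupZ (ne_of_lt hZT)
    have hTset : (T : Set K) = (P : Set K) * (Z : Set K) := by
      rw [← hPsupZ]
      exact Subgroup.mul_normal P Z
    set Cp := Subgroup.centralizer (P : Set K) ⊓ P with hCp
    have hCpT : NormalIn Cp T := by
      constructor
      · exact inf_le_right.trans hPT.1
      · intro b hb a ha
        obtain ⟨ha1, ha2⟩ := ha
        refine ⟨?_, hPT.2 b hb a ha2⟩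
        show b * a * b⁻¹ ∈ Subgroup.centralizer (P : Set K)
        rw [Subgroup.mem_centralizer_iff]
        intro h hh
        have hh' : b⁻¹ * h * b ∈ P := by
          have := hPT.2 b⁻¹ (T.inv_mem hb) h hh
          simpa using this
        have h2 := Subgroup.mem_centralizer_iff.mp ha1 _ hh'
        calc h * (b * a * b⁻¹) = b * ((b⁻¹ * h * b) * a) * b⁻¹ := by group
        _ = b * (a * (b⁻¹ * h * b)) * b⁻¹ := by rw [h2]
        _ = (b * a * b⁻¹) * h := by group
    rcases hdich (Cp ⊔ Z) (normalIn_sup hCpT hZinT) le_sup_right with hCpZ | hCpZ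
    · -- Cp ≤ Z : P is quasisimple
      have hCpleZ : Cp ≤ Z := le_sup_left.trans (le_of_eq hCpZ)
      have hCpeq : Cp = Z ⊓ P := by
        apply le_antisymm (le_inf hCpleZ inf_le_right)
        rintro x ⟨hxZ, hxP⟩
        refine ⟨?_, hxP⟩
        show x ∈ Subgroup.centralizer (P : Set K)
        rw [Subgroup.mem_centralizer_iff]
        intro h _
        exact Subgroup.mem_center_iff.mp (hcent hxZ) h
      have hcommP : commutator ↥P = ⊤ := by
        have h1 : Subgroup.map P.subtype (_root_.commutator ↥P) = ⁅P, P⁆ := by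
          rw [_root_.commutator_def, Subgroup.map_commutator, map_subtype_top]
        apply Subgroup.map_injective P.subtype_injective
        rw [h1, map_subtype_top, hPperf]
      have hcenterP : Subgroup.map P.subtype (Subgroup.center ↥P) = Cp := by
        apply le_antisymm
        · rintro _ ⟨z, hz, rfl⟩
          refine ⟨?_, z.2⟩
          show (z : K) ∈ Subgroup.centralizer (P : Set K)
          rw [Subgroup.mem_centralizer_iff]
          intro h hh
          have := Subgroup.mem_center_iff.mp hz ⟨h, hh⟩
          exact congrArg Subtype.val this
        · intro y hy
          refine ⟨⟨y, hy.2⟩, ?_, rfl⟩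
          show (⟨y, hy.2⟩ : ↥P) ∈ Subgroup.center ↥P
          rw [Subgroup.mem_center_iff]
          intro g
          apply Subtype.ext
          exact Subgroup.mem_centralizer_iff.mp hy.1 (g : K) g.2
      have hPnotab : ¬ ((⊤ : Subgroup ↥P) ≤ Subgroup.center ↥P) := by
        intro hab
        have habel : ⁅P, P⁆ = ⊥ := by
          rw [eq_bot_iff]
          refine Subgroup.commutator_le.mpr fun g1 h1' g2 h2' => ?_
          have := Subgroup.mem_center_iff.mp (hab (Subgroup.mem_top ⟨g1, h1'⟩)) ⟨g2, h2'⟩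
          have hval := congrArg Subtype.val this
          rw [Subgroup.mem_bot, commutatorElement_eq_one_iff_commute]
          exact hval.symm
        rw [hPperf] at habel
        exact hPne habel
      haveI hntQ : Nontrivial (↥P ⧸ Subgroup.center ↥P) := by
        obtain ⟨x, hx⟩ : ∃ x : ↥P, x ∉ Subgroup.center ↥P := by
          by_contra hall
          push_neg at hall
          exact hPnotab fun y _ => hall y
        refine ⟨QuotientGroup.mk x, 1, ?_⟩
        simp only [ne_eq, QuotientGroup.eq_one_iff]
        exact hx
      have hsimpleQ : IsSimpleGroup (↥P ⧸ Subgroup.center ↥P) := by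
        refine ⟨fun N hN => ?_⟩
        set B := Subgroup.comap (QuotientGroup.mk' (Subgroup.center ↥P)) N with hB
        have hcenB : Subgroup.center ↥P ≤ B := by
          intro z hz
          rw [hB, Subgroup.mem_comap]
          have h1 : (QuotientGroup.mk' (Subgroup.center ↥P)) z = 1 :=
            (QuotientGroup.eq_one_iff z).mpr hz
          rw [h1]
          exact N.one_mem
        haveI hBn : B.Normal := hN.comap _
        set B' := Subgroup.map P.subtype B with hB'
        have hB'P : NormalIn B' P := by
          constructor
          · rintro _ ⟨b, _, rfl⟩; exact b.2
          · intro p hp a ha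
            obtain ⟨b, hb, rfl⟩ := ha
            exact ⟨⟨p, hp⟩ * b * ⟨p, hp⟩⁻¹, hBn.conj_mem b hb ⟨p, hp⟩, rfl⟩
        have hB'T : NormalIn B' T := by
          refine ⟨hB'P.1.trans hPT.1, ?_⟩
          intro t ht a ha
          have ht' : t ∈ (P : Set K) * (Z : Set K) := by rw [← hTset]; exact ht
          obtain ⟨p, hp, z, hz, rfl⟩ := ht'
          have hzc := Subgroup.mem_center_iff.mp (hcent hz)
          have h1 : (p * z) * a * (p * z)⁻¹ = p * a * p⁻¹ := by
            have hza : z * a * z⁻¹ = a := by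
              rw [← hzc a]; group
            rw [mul_inv_rev]
            calc p * z * a * (z⁻¹ * p⁻¹) = p * (z * a * z⁻¹) * p⁻¹ := by group
            _ = p * a * p⁻¹ := by rw [hza]
          rw [h1]
          exact hB'P.2 p hp a ha
        rcases hdich (B' ⊔ Z) (normalIn_sup hB'T hZinT) le_sup_right with h | h
        · left
          have hB'Z : B' ≤ Z := le_sup_left.trans (le_of_eq h)
          have hB'Cp : B' ≤ Cp := by rw [hCpeq]; exact le_inf hB'Z hB'P.1
          have hBcen : B ≤ Subgroup.center ↥P := by
            intro b hb
            have h2 : (b : K) ∈ Cp := hB'Cp ⟨b, hb, rfl⟩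
            rw [← hcenterP] at h2
            obtain ⟨z, hz, hzb⟩ := h2
            have : z = b := Subtype.coe_injective hzb
            rwa [this] at hz
          have hNle : N ≤ ⊥ := by
            intro q hq
            obtain ⟨x, rfl⟩ := QuotientGroup.mk'_surjective _ q
            have hxB : x ∈ B := hq
            rw [Subgroup.mem_bot]
            show (QuotientGroup.mk' (Subgroup.center ↥P)) x = 1
            exact (QuotientGroup.eq_one_iff x).mpr (hBcen hxB)
          exact le_bot_iff.mp hNle
        · right
          have hPmod : P = B' ⊔ (Z ⊓ P) := by
            apply le_antisymm
            · intro x hxP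
              have hxT : x ∈ B' ⊔ Z := by rw [h]; exact hPT.1 hxP
              have hxm : x ∈ ((B' : Set K) * (Z : Set K)) := by
                rw [← Subgroup.mul_normal B' Z]
                exact hxT
              obtain ⟨b, hb, z, hz, rfl⟩ := hxm
              have hzP : z ∈ P := by
                have hz2 : z = b⁻¹ * (b * z) := by group
                rw [hz2]
                exact P.mul_mem (P.inv_mem (hB'P.1 hb)) hxP
              exact Subgroup.mul_mem _ (Subgroup.mem_sup_left hb)
                (Subgroup.mem_sup_right ⟨hz, hzP⟩)
            · exact sup_le hB'P.1 inf_le_right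
          have hPmap : Subgroup.map P.subtype (B ⊔ Subgroup.center ↥P) = P := by
            rw [Subgroup.map_sup, hcenterP, hCpeq, ← hB']
            exact hPmod.symm
          have hBtop : B ⊔ Subgroup.center ↥P = ⊤ := by
            apply Subgroup.map_injective P.subtype_injective
            rw [hPmap, map_subtype_top]
          rw [sup_of_le_left hcenB] at hBtop
          have hNmap : N = Subgroup.map (QuotientGroup.mk' (Subgroup.center ↥P)) B :=
            (map_comap_eq_self_of_surjective (QuotientGroup.mk'_surjective _) N).symm
          rw [hNmap, hBtop, ← MonoidHom.range_eq_map]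
          exact MonoidHom.range_eq_top.mpr (QuotientGroup.mk'_surjective _)
      have hlenP : γ.length ↥P ≠ ⊤ := γ.length_ne_top_of_subnormal P hPsub hK
      have hradP : γ.sub ↥P = ⊤ :=
        γ.sub_eq_top_of_quasisimple hγF ↥P hlenP ⟨hcommP, hsimpleQ⟩
      have hPle := γ.le_sub_of_subnormal P hPsub hradP
      have hTZ : T = Z := by
        rw [← hPsupZ, sup_eq_right.mpr hPle]
      exact absurd hTZ.symm (ne_of_lt hZT)
    · -- Cp ⊔ Z = T : T would be abelian mod Z, contradiction
      apply hcase
      have h1 : Subgroup.map π T = Subgroup.map π Cp := by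
        rw [← hCpZ, Subgroup.map_sup, (hmapbot Z).mpr le_rfl, sup_bot_eq]
      have h2 : ⁅Cp, Cp⁆ = ⊥ := by
        rw [eq_bot_iff]
        refine Subgroup.commutator_le.mpr fun g1 h1' g2 h2' => ?_
        have h3 := Subgroup.mem_centralizer_iff.mp h1'.1 g2 h2'.2
        rw [Subgroup.mem_bot, commutatorElement_eq_one_iff_commute]
        exact h3.symm
      intro x hx
      have hx1 : π x ∈ Subgroup.map π ⁅T, T⁆ := ⟨x, hx, rfl⟩
      rw [Subgroup.map_commutator, h1, ← Subgroup.map_commutator, h2, Subgroup.map_bot] at hx1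
      exact (QuotientGroup.eq_one_iff x).mp (Subgroup.mem_bot.mp hx1)

/-- Synthetic replacement for Bender's theorem: the centralizer of the radical is
contained in the radical. -/
lemma centralizer_sub_le (hγF : γ.FStarLe) (H : Type) [Group H] [Finite H]
    (hH : γ.length H ≠ ⊤) :
    Subgroup.centralizer ((γ.sub H : Subgroup H) : Set H) ≤ γ.sub H := by
  set C := Subgroup.centralizer ((γ.sub H : Subgroup H) : Set H) with hC
  haveI hsubN : (γ.sub H).Normal := γ.normal H
  have hCN : C.Normal := by
    constructor
    intro c hc g
    rw [hC, Subgroup.mem_centralizer_iff] at hc ⊢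
    intro h hh
    have hh' : g⁻¹ * h * g ∈ γ.sub H := by
      have := hsubN.conj_mem h hh g⁻¹
      simpa using this
    have h2 := hc _ hh'
    calc h * (g * c * g⁻¹) = g * ((g⁻¹ * h * g) * c) * g⁻¹ := by group
    _ = g * (c * (g⁻¹ * h * g)) * g⁻¹ := by rw [h2]
    _ = (g * c * g⁻¹) * h := by group
  have hP2 := γ.inf_eq H C hCN
  have hlenC : γ.length ↥C ≠ ⊤ := γ.length_ne_top_of_normal H C hCN hH
  have hcent : γ.sub ↥C ≤ Subgroup.center ↥C := by
    intro z hz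
    rw [Subgroup.mem_center_iff]
    intro g
    apply Subtype.ext
    show (g : H) * z = z * g
    have hzH : (z : H) ∈ γ.sub H ⊓ C := by
      rw [hP2]
      exact ⟨z, hz, rfl⟩
    exact (Subgroup.mem_centralizer_iff.mp g.2 _ hzH.1).symm
  have htop := γ.sub_eq_top_of_central hγF ↥C hlenC hcent
  have hfin : γ.sub H ⊓ C = C := by rw [hP2, htop, map_subtype_top]
  exact inf_eq_right.mp hfin

end PlotkinRadical

lemma NormalIn.map {G H : Type*} [Group G] [Group H] {A B : Subgroup G}
    (h : NormalIn A B) (f : G →* H) : NormalIn (A.map f) (B.map f) := by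
  refine ⟨Subgroup.map_mono h.1, ?_⟩
  rintro _ ⟨b, hb, rfl⟩ _ ⟨a, ha, rfl⟩
  refine ⟨b * a * b⁻¹, h.2 b hb a ha, ?_⟩
  rw [map_mul, map_mul, map_inv]

namespace PlotkinRadical

variable (γ : PlotkinRadical)

lemma claim2_case_split (G : Type) [Group G] [Finite G] (M : Subgroup G) (hM : IsCoatom M)
    (k : ℕ) (hk : ¬ (γ.series G k ≤ M)) (m : ℕ) :
    (γ.series ↥M m).map M.subtype ≤ γ.series G (k + m) := by
  haveI hVn := γ.series_normal G k
  have hsup : M ⊔ γ.series G k = ⊤ :=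
    hM.2 _ (lt_of_le_of_ne le_sup_left fun h => hk (le_sup_right.trans h.symm.le))
  set φ := (QuotientGroup.mk' (γ.series G k)).comp M.subtype with hφ
  have hφs : Function.Surjective φ := by
    intro q
    obtain ⟨g, rfl⟩ := QuotientGroup.mk'_surjective (γ.series G k) q
    have hg : g ∈ ((M : Set G) * (γ.series G k : Set G)) := by
      rw [← Subgroup.mul_normal M (γ.series G k), hsup]
      trivial
    obtain ⟨x, hx, v, hv, rfl⟩ := hg
    refine ⟨⟨x, hx⟩, ?_⟩
    show (QuotientGroup.mk' (γ.series G k)) x = (QuotientGroup.mk' (γ.series G k)) (x * v)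
    rw [map_mul, show (QuotientGroup.mk' (γ.series G k)) v = 1 from (QuotientGroup.eq_one_iff v).mpr hv, mul_one]
  have h4 := γ.series_map_le ↥M (G ⧸ γ.series G k) φ hφs m
  have h6 := γ.series_shift G k (γ.series G k) hVn rfl m
  rintro _ ⟨y, hy, rfl⟩
  rw [h6]
  exact Subgroup.mem_comap.mpr (h4 ⟨y, hy, rfl⟩)

lemma claim2 (hγF : γ.FStarLe) : ∀ (n : ℕ) (G : Type) [Group G] [Finite G] (M : Subgroup G),
    Nat.card G ≤ n → IsCoatom M → γ.length G ≠ ⊤ →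
    ∀ m : ℕ, (γ.series ↥M m).map M.subtype ≤ γ.series G (m + 2) := by
  intro n
  induction n with
  | zero =>
    intro G _ _ M hcard _ _ _
    exact ((Nat.card_pos (α := G)).ne' (Nat.le_zero.mp hcard)).elim
  | succ n ih =>
    intro G _ _ M hcard hM hG m
    by_cases h1 : γ.series G 1 ≤ M
    swap
    · exact (γ.claim2_case_split G M hM 1 h1 m).trans (γ.series_mono G (by omega))
    by_cases h2 : γ.series G 2 ≤ M
    swap
    · exact (γ.claim2_case_split G M hM 2 h2 m).trans (γ.series_mono G (by omega))
    -- main case : γ_{(2)}(G) ≤ M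
    haveI hRn : (γ.series G 1).Normal := γ.series_normal G 1
    haveI hWn : (γ.series G 2).Normal := γ.series_normal G 2
    have hGnt : Nontrivial G := by
      by_contra hnt
      rw [not_nontrivial_iff_subsingleton] at hnt
      refine hM.1 ?_
      rw [eq_top_iff]
      intro x _
      have hx1 : x = 1 := Subsingleton.elim x 1
      rw [hx1]; exact M.one_mem
    have hRneBot : γ.series G 1 ≠ ⊥ := by
      rw [γ.series_one]
      exact γ.sub_ne_bot hγF G hGnt hG
    have hRrad : γ.gam (γ.series G 1) = γ.series G 1 := by
      rw [γ.series_one, ← γ.gam_top, γ.gam_idem]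
    have hNR_M : NormalIn (γ.series G 1) M := NormalIn.of_normal hRn h1
    have hNW_M : NormalIn (γ.series G 2) M := NormalIn.of_normal hWn h2
    have hNR_W : NormalIn (γ.series G 1) (γ.series G 2) :=
      NormalIn.of_normal hRn (γ.series_mono G (by omega))
    have hRleGamM : γ.series G 1 ≤ γ.gam M := by
      have h3 := γ.gam_inf hNR_M
      rw [hRrad] at h3
      exact inf_eq_right.mp h3
    have hGamW : γ.gam (γ.series G 2) = γ.series G 1 := by
      apply le_antisymm
      · have hWtop : NormalIn (γ.series G 2) ⊤ := NormalIn.of_normal hWn le_top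
        have h4 := γ.gam_inf (γ.normalIn_gam hWtop)
        rw [γ.gam_idem, γ.gam_top] at h4
        rw [γ.series_one]
        exact inf_eq_right.mp h4
      · have h5 := γ.gam_inf hNR_W
        rw [hRrad] at h5
        exact inf_eq_right.mp h5
    have hGamMW : γ.gam M ⊓ γ.series G 2 = γ.series G 1 := by
      rw [γ.gam_inf hNW_M, hGamW]
    set π := QuotientGroup.mk' (γ.series G 1) with hπdef
    have hπs : Function.Surjective π := QuotientGroup.mk'_surjective _
    have hWcomap := γ.series_succ' G 1 (γ.series G 1) hRn rfl
    have hWbar : (γ.series G 2).map π = γ.sub (G ⧸ γ.series G 1) := by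
      rw [hWcomap]
      exact map_comap_eq_self_of_surjective hπs _
    have hmapR : (γ.series G 1).map π = ⊥ := by
      rw [eq_bot_iff]
      rintro _ ⟨x, hx, rfl⟩
      exact Subgroup.mem_bot.mpr ((QuotientGroup.eq_one_iff x).mpr hx)
    have hXWbot : (γ.gam M).map π ⊓ (γ.series G 2).map π = ⊥ := by
      have hc1 : Subgroup.comap π ((γ.gam M).map π ⊓ (γ.series G 2).map π)
          = (γ.gam M ⊔ (γ.series G 1)) ⊓ ((γ.series G 2) ⊔ (γ.series G 1)) := by
        rw [Subgroup.comap_inf, comap_map_eq, comap_map_eq, QuotientGroup.ker_mk']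
      rw [sup_of_le_left hRleGamM, sup_of_le_left (γ.series_mono G (by omega)), hGamMW] at hc1
      have hc2 : (γ.gam M).map π ⊓ (γ.series G 2).map π
          = Subgroup.map π (Subgroup.comap π ((γ.gam M).map π ⊓ (γ.series G 2).map π)) :=
        (map_comap_eq_self_of_surjective hπs _).symm
      rw [hc1] at hc2
      rw [hc2, hmapR]
    have hXbar_bot : (γ.gam M).map π = ⊥ := by
      haveI hWbarN : ((γ.series G 2).map π).Normal := hWn.map π hπs
      rw [eq_bot_iff]
      intro x hx
      have hcmem : x ∈ Subgroup.centralizer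
          ((γ.sub (G ⧸ γ.series G 1) : Subgroup _) : Set _) := by
        rw [Subgroup.mem_centralizer_iff]
        intro w hw
        have hwW : w ∈ (γ.series G 2).map π := by rw [hWbar]; exact hw
        have hXin : NormalIn ((γ.gam M).map π) (M.map π) :=
          (γ.normalIn_gam (normalIn_refl M)).map π
        have hwM : w ∈ M.map π := Subgroup.map_mono h2 hwW
        have hcom : x * w * x⁻¹ * w⁻¹ ∈ (γ.gam M).map π ⊓ (γ.series G 2).map π := by
          constructor
          · have h7 : w * x⁻¹ * w⁻¹ ∈ (γ.gam M).map π :=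
              hXin.2 w hwM x⁻¹ (Subgroup.inv_mem _ hx)
            have h7' := Subgroup.mul_mem _ hx h7
            simpa [mul_assoc] using h7'
          · have h8 : x * w * x⁻¹ ∈ (γ.series G 2).map π := hWbarN.conj_mem w hwW x
            exact Subgroup.mul_mem _ h8 (Subgroup.inv_mem _ hwW)
        rw [hXWbot] at hcom
        have h9 : ⁅x, w⁆ = 1 := by
          rw [commutatorElement_def]
          exact Subgroup.mem_bot.mp hcom
        exact (commutatorElement_eq_one_iff_commute.mp h9).symm.eq
      have hlenGbar : γ.length (G ⧸ γ.series G 1) ≠ ⊤ :=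
        γ.length_ne_top_of_surjective G _ π hπs hG
      have h11 := γ.centralizer_sub_le hγF (G ⧸ γ.series G 1) hlenGbar hcmem
      rw [← hWbar] at h11
      rw [← hXWbot]
      exact ⟨hx, h11⟩
    have hGamM : γ.gam M = γ.series G 1 := by
      refine le_antisymm (fun x hx => ?_) hRleGamM
      have h12 : π x ∈ (γ.gam M).map π := ⟨x, hx, rfl⟩
      rw [hXbar_bot, Subgroup.mem_bot] at h12
      exact (QuotientGroup.eq_one_iff x).mp h12
    -- maximality of the image of M
    have hcomapM : Subgroup.comap π (M.map π) = M := by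
      rw [comap_map_eq, QuotientGroup.ker_mk', sup_of_le_left h1]
    have hMbarcoatom : IsCoatom (M.map π) := by
      constructor
      · intro htop
        apply hM.1
        rw [← hcomapM, htop, Subgroup.comap_top]
      · intro B hB
        have hle : M ≤ Subgroup.comap π B := by
          rw [← hcomapM]; exact Subgroup.comap_mono hB.le
        have hne : M ≠ Subgroup.comap π B := by
          intro heq
          apply hB.ne'
          rw [← map_comap_eq_self_of_surjective hπs B, ← heq]
        have htop := hM.2 _ (lt_of_le_of_ne hle hne)
        rw [← map_comap_eq_self_of_surjective hπs B, htop, ← MonoidHom.range_eq_map]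
        exact MonoidHom.range_eq_top.mpr hπs
    have hlenGbar : γ.length (G ⧸ γ.series G 1) ≠ ⊤ :=
      γ.length_ne_top_of_surjective G _ π hπs hG
    have hcardGbar : Nat.card (G ⧸ γ.series G 1) ≤ n := by
      have hmul := Subgroup.card_eq_card_quotient_mul_card_subgroup (γ.series G 1)
      have hR2 : 2 ≤ Nat.card ↥(γ.series G 1) := by
        haveI : Nontrivial ↥(γ.series G 1) :=
          (Subgroup.nontrivial_iff_ne_bot (γ.series G 1)).mpr hRneBot
        exact Finite.one_lt_card
      have hq1 : 0 < Nat.card (G ⧸ γ.series G 1) := Nat.card_pos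
      have hmulle : Nat.card (G ⧸ γ.series G 1) * 2 ≤ Nat.card G := by
        calc Nat.card (G ⧸ γ.series G 1) * 2
            ≤ Nat.card (G ⧸ γ.series G 1) * Nat.card ↥(γ.series G 1) :=
              Nat.mul_le_mul_left _ hR2
        _ = Nat.card G := hmul.symm
      omega
    -- conclude
    cases m with
    | zero =>
      rw [γ.series_zero, Subgroup.map_bot]
      exact bot_le
    | succ m' =>
      set f0 := π.comp M.subtype with hf0def
      have hf0 : ∀ x : ↥M, f0 x ∈ M.map π := fun x => ⟨x, x.2, rfl⟩
      set φ' := f0.codRestrict (M.map π) hf0 with hφ'def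
      have hφ's : Function.Surjective φ' := by
        rintro ⟨y, hy⟩
        obtain ⟨x, hx, rfl⟩ := hy
        exact ⟨⟨x, hx⟩, rfl⟩
      have hkerφ' : φ'.ker = γ.sub ↥M := by
        ext x
        constructor
        · intro hx
          have h12 : π ↑x = 1 := congrArg Subtype.val hx
          have h13 : (↑x : G) ∈ γ.series G 1 := (QuotientGroup.eq_one_iff _).mp h12
          rw [← hGamM] at h13
          obtain ⟨z, hz, hzx⟩ := h13
          have hzz : z = x := Subtype.coe_injective hzx
          rwa [hzz] at hz
        · intro hx
          apply Subtype.ext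
          show π ↑x = 1
          apply (QuotientGroup.eq_one_iff _).mpr
          rw [← hGamM]
          exact ⟨x, hx, rfl⟩
      have h8 := γ.series_map_ker_le ↥M ↥(M.map π) φ' hφ's hkerφ' m'
      have hIH := ih (G ⧸ γ.series G 1) (M.map π) hcardGbar hMbarcoatom hlenGbar m'
      rintro _ ⟨y, hy, rfl⟩
      have h9 : φ' y ∈ γ.series ↥(M.map π) m' := h8 ⟨y, hy, rfl⟩
      have h10 : π ↑y ∈ (γ.series ↥(M.map π) m').map (M.map π).subtype := ⟨φ' y, h9, rfl⟩
      have h11 := hIH h10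
      have h12 : (↑y : G) ∈ γ.series G (1 + (m' + 2)) := by
        rw [γ.series_shift G 1 (γ.series G 1) hRn rfl (m' + 2)]
        exact Subgroup.mem_comap.mpr h11
      have h13 : 1 + (m' + 2) = m' + 1 + 2 := by omega
      rw [h13] at h12
      exact h12

end PlotkinRadical
theorem plotkinRadical_length_sub_le_two (γ : PlotkinRadical)
    (hγF : ∀ (G : Type) [Group G] [Finite G], γ.length G ≠ ⊤ → genFitting G ≤ γ.sub G)
    (G : Type) [Group G] [Finite G] (M : Subgroup G) (hM : IsCoatom M)
    (hG : γ.length G ≠ ⊤) (hMfin : γ.length ↥M ≠ ⊤) :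
    γ.length G - γ.length ↥M ≤ 2 := by
  have hγF' : γ.FStarLe := hγF
  obtain ⟨h, hh⟩ := WithTop.ne_top_iff_exists.mp hMfin
  have hMser : γ.series ↥M h = ⊤ := (γ.length_le_iff ↥M h).mp (le_of_eq hh.symm)
  have hMle : M ≤ γ.series G (h + 2) := by
    have hcl := γ.claim2 hγF' (Nat.card G) G M le_rfl hM hG h
    rw [hMser, PlotkinRadical.map_subtype_top] at hcl
    exact hcl
  have key : γ.length G ≤ ((h + 2 : ℕ) : ℕ∞) := by
    by_cases hY : γ.series G (h + 2) = ⊤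
    · exact (γ.length_le_iff G (h + 2)).mpr hY
    · have hYM : γ.series G (h + 2) = M := by
        by_contra hne
        exact hY (hM.2 _ (lt_of_le_of_ne hMle (Ne.symm hne)))
      have hMnormal : M.Normal := hYM ▸ γ.series_normal G (h + 2)
      have h7 := γ.series_inf G M hMnormal h
      rw [hMser, PlotkinRadical.map_subtype_top] at h7
      have hMle2 : M ≤ γ.series G h := (le_of_eq h7).trans inf_le_left
      by_cases hY' : γ.series G h = ⊤
      · exact ((γ.length_le_iff G h).mpr hY').trans (Nat.cast_le.mpr (by omega))
      · have hYM' : γ.series G h = M := by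
          by_contra hne
          exact hY' (hM.2 _ (lt_of_le_of_ne hMle2 (Ne.symm hne)))
        haveI := hMnormal
        haveI hQnt : Nontrivial (G ⧸ M) := by
          obtain ⟨x, hx⟩ : ∃ x, x ∉ M := by
            by_contra hall
            push_neg at hall
            exact hM.1 (eq_top_iff.mpr fun y _ => hall y)
          exact ⟨QuotientGroup.mk x, 1, by
            simpa [ne_eq, QuotientGroup.eq_one_iff] using hx⟩
        have hsimple : IsSimpleGroup (G ⧸ M) := by
          refine ⟨fun N hN => ?_⟩
          set B := Subgroup.comap (QuotientGroup.mk' M) N with hB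
          have hMB : M ≤ B := by
            intro x hx
            rw [hB, Subgroup.mem_comap,
              show (QuotientGroup.mk' M) x = 1 from (QuotientGroup.eq_one_iff x).mpr hx]
            exact N.one_mem
          have hNmap : N = Subgroup.map (QuotientGroup.mk' M) B :=
            (map_comap_eq_self_of_surjective (QuotientGroup.mk'_surjective M) N).symm
          rcases eq_or_lt_of_le hMB with heq | hlt
          · left
            rw [hNmap, ← heq, eq_bot_iff]
            rintro _ ⟨x, hx, rfl⟩
            exact Subgroup.mem_bot.mpr ((QuotientGroup.eq_one_iff x).mpr hx)
          · right
            have hBtop := hM.2 B hlt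
            rw [hNmap, hBtop, ← MonoidHom.range_eq_map]
            exact MonoidHom.range_eq_top.mpr (QuotientGroup.mk'_surjective M)
        have hlenQ : γ.length (G ⧸ M) ≠ ⊤ :=
          γ.length_ne_top_of_surjective G _ (QuotientGroup.mk' M)
            (QuotientGroup.mk'_surjective M) hG
        have hsubQ : γ.sub (G ⧸ M) = ⊤ := γ.sub_eq_top_of_simple hγF' (G ⧸ M) hlenQ hsimple
        have hser : γ.series G (h + 1) = ⊤ := by
          rw [γ.series_succ' G h M hMnormal hYM'.symm, hsubQ, Subgroup.comap_top]
        exact ((γ.length_le_iff G (h + 1)).mpr hser).trans (Nat.cast_le.mpr (by omega))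
  rw [← hh]
  have hfin : γ.length G ≤ 2 + (h : ℕ∞) := by
    refine key.trans (le_of_eq ?_)
    rw [show ((h + 2 : ℕ) : ℕ∞) = (h : ℕ∞) + 2 by norm_cast]
    exact add_comm _ _
  exact tsub_le_iff_right.mpr hfin
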